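/- Suppose that for every finite digit string w over {0,…,a−1} the counting function S_w(N) of occurrences of w in the base-a/b representations of 1,…,N satisfies S_w(N) = N a^{−|w|} log_{a/b} N + O(N log log N). Then the real number 𝔷_{a/b} ∈ (0,1), whose base-a expansion is the concatenation of the base-a/b representations of 1, 2, 3, …, is normal in base a. -/

import Mathlib

open Filter Real


open Filter Real

private lemma CRB_nat_succ_div : Tendsto (fun n : ℕ => ((n:ℝ)+1)/n) atTop (nhds 1) := by
  have h := tendsto_one_div_atTop_nhds_zero_nat (𝕜 := ℝ)
  have h2 := (tendsto_const_nhds (x := (1:ℝ)) (f := atTop (α := ℕ))).add h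
  simp only [add_zero] at h2
  refine h2.congr' ?_
  filter_upwards [eventually_gt_atTop 0] with n hn
  have : (n:ℝ) ≠ 0 := Nat.cast_ne_zero.mpr hn.ne'
  field_simp

private lemma CRB_loglog (q : ℝ) (hq : 1 < q) :
    Tendsto (fun N : ℕ => Real.log (Real.log N) / Real.logb q N) atTop (nhds 0) := by
  have h1 : Tendsto (fun x : ℝ => Real.log (Real.log x) / Real.log x) atTop (nhds 0) := by
    have := (Real.isLittleO_log_id_atTop.tendsto_div_nhds_zero).comp Real.tendsto_log_atTop
    exact this
  have h2 := (h1.comp (tendsto_natCast_atTop_atTop (R := ℝ))).mul_const (Real.log q)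
  rw [zero_mul] at h2
  refine h2.congr ?_
  intro N
  simp only [Function.comp, Real.logb, div_div_eq_mul_div, div_mul_eq_mul_div]

private lemma CRB_inv_logb (q : ℝ) (hq : 1 < q) :
    Tendsto (fun N : ℕ => (Real.logb q N)⁻¹) atTop (nhds 0) :=
  (((Real.tendsto_logb_atTop hq).comp (tendsto_natCast_atTop_atTop (R := ℝ)))).inv_tendsto_atTop

private lemma CRB_log_succ_div : Tendsto (fun N : ℕ => Real.log ((N:ℝ)+1) / Real.log N) atTop (nhds 1) := by
  have hlog : Tendsto (fun N : ℕ => Real.log N) atTop atTop :=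
    Real.tendsto_log_atTop.comp (tendsto_natCast_atTop_atTop (R := ℝ))
  have hinv : Tendsto (fun N : ℕ => (Real.log N)⁻¹) atTop (nhds 0) := hlog.inv_tendsto_atTop
  have hup : Tendsto (fun N : ℕ => 1 + Real.log 2 * (Real.log N)⁻¹) atTop (nhds 1) := by
    have := (hinv.const_mul (Real.log 2)).const_add 1
    simpa using this
  refine tendsto_of_tendsto_of_tendsto_of_le_of_le' tendsto_const_nhds hup ?_ ?_
  · filter_upwards [eventually_ge_atTop 2] with N hN
    have h2 : (2:ℝ) ≤ N := by exact_mod_cast hN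
    have hpos : 0 < Real.log N := Real.log_pos (by linarith)
    rw [le_div_iff₀ hpos, one_mul]
    apply Real.log_le_log (by linarith) (by linarith)
  · filter_upwards [eventually_ge_atTop 2] with N hN
    have h2 : (2:ℝ) ≤ N := by exact_mod_cast hN
    have hpos : 0 < Real.log N := Real.log_pos (by linarith)
    have hle : Real.log ((N:ℝ)+1) ≤ Real.log 2 + Real.log N := by
      rw [← Real.log_mul (by norm_num) (by linarith)]
      apply Real.log_le_log (by linarith)
      linarith
    rw [div_le_iff₀ hpos]
    have hexp : (1 + Real.log 2 * (Real.log (N:ℝ))⁻¹) * Real.log N = Real.log N + Real.log 2 := by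
      field_simp
    rw [hexp]
    linarith

private lemma CRB_rho (q : ℝ) (hq : 1 < q) :
    Tendsto (fun N : ℕ => (((N:ℝ)+1) * Real.logb q ((N:ℝ)+1)) / ((N:ℝ) * Real.logb q N))
      atTop (nhds 1) := by
  have hlq : Real.log q ≠ 0 := ne_of_gt (Real.log_pos hq)
  have h := CRB_nat_succ_div.mul CRB_log_succ_div
  rw [mul_one] at h
  refine h.congr' ?_
  filter_upwards [eventually_gt_atTop 1] with N hN
  have hn : (N:ℝ) ≠ 0 := Nat.cast_ne_zero.mpr (by omega)
  have hlogN : Real.log N ≠ 0 := ne_of_gt (Real.log_pos (by exact_mod_cast hN))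
  simp only [Real.logb]
  field_simp

private lemma CRB_ratio (q c C : ℝ) (hq : 1 < q) (f : ℕ → ℝ)
    (hf : ∀ N : ℕ, 3 ≤ N → |f N - c * ((N:ℝ) * Real.logb q N)| ≤ C * N * Real.log (Real.log N)) :
    Tendsto (fun N : ℕ => f N / ((N:ℝ) * Real.logb q N)) atTop (nhds c) := by
  have hC : 0 ≤ C := by
    have h3 := hf 3 le_rfl
    have h1 : (1:ℝ) < Real.log 3 := by
      rw [← Real.exp_lt_exp (x := 1)] at *
      calc Real.exp 1 < 2.7182818286 := Real.exp_one_lt_d9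
        _ < Real.exp (Real.log 3) := by
            rw [Real.exp_log (by norm_num : (0:ℝ) < 3)]
            norm_num
    have h2 : 0 < Real.log (Real.log 3) := Real.log_pos h1
    norm_num at h3
    have h0 : (0:ℝ) ≤ C * 3 * Real.log (Real.log 3) := le_trans (abs_nonneg _) h3
    nlinarith [h0, h2]
  have hkey : Tendsto (fun N : ℕ => f N / ((N:ℝ) * Real.logb q N) - c) atTop (nhds 0) := by
    apply squeeze_zero_norm' (a := fun N : ℕ => C * (Real.log (Real.log N) / Real.logb q N))
    · filter_upwards [eventually_ge_atTop 3] with N hN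
      have hN3 : (3:ℝ) ≤ N := by exact_mod_cast hN
      have hφ : 0 < Real.logb q N := Real.logb_pos hq (by linarith)
      have hNpos : (0:ℝ) < N := by linarith
      have hNφ : (0:ℝ) < (N:ℝ) * Real.logb q N := by positivity
      have heq : f N / ((N:ℝ) * Real.logb q N) - c =
          (f N - c * ((N:ℝ) * Real.logb q N)) / ((N:ℝ) * Real.logb q N) := by
        field_simp
      rw [Real.norm_eq_abs, heq, abs_div, abs_of_pos hNφ]
      rw [div_le_iff₀ hNφ]
      calc |f N - c * ((N:ℝ) * Real.logb q N)| ≤ C * N * Real.log (Real.log N) := hf N hN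
        _ = C * (Real.log (Real.log N) / Real.logb q N) * ((N:ℝ) * Real.logb q N) := by
            field_simp
    · have := (CRB_loglog q hq).const_mul C
      simpa using this
  have := hkey.add (tendsto_const_nhds (x := c))
  simpa using this


private lemma CRB_len_eq (a : ℕ) (l : List ℕ) (hd : ∀ d ∈ l, d < a) :
    l.length = ∑ d ∈ Finset.range a, ((Finset.range l.length).filter
      (fun k => k + 1 ≤ l.length ∧ ∀ i : Fin 1, l.getD (k + (i:ℕ)) 0 = d)).card := by
  have hfib : ∀ k ∈ Finset.range l.length, l.getD k 0 ∈ Finset.range a := by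
    intro k hk
    rw [Finset.mem_range] at hk ⊢
    rw [l.getD_eq_getElem 0 hk]
    exact hd _ (l.getElem_mem hk)
  have h := Finset.card_eq_sum_card_fiberwise hfib
  rw [Finset.card_range] at h
  refine h.trans (Finset.sum_congr rfl fun d _ => ?_)
  congr 1
  apply Finset.filter_congr
  intro k hk
  rw [Finset.mem_range] at hk
  constructor
  · intro hkd
    exact ⟨by omega, fun i => by
      have : (i:ℕ) = 0 := by omega
      rw [this, Nat.add_zero, hkd]⟩
  · intro ⟨_, hi⟩
    have := hi 0
    simpa using this



private lemma CRB_comb_low (r : ℕ) (hr : 1 ≤ r) (w : Fin r → ℕ)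
    (rep : ℕ → List ℕ) (z : ℕ → ℕ)
    (hz : ∀ n : ℕ, 0 < n → ∀ k : ℕ, 1 ≤ k → k ≤ (rep n).length →
      z (k + ∑ j ∈ Finset.Ico 1 n, (rep j).length) = (rep n).getD ((rep n).length - k) 0)
    (N x : ℕ) (hx : ∑ j ∈ Finset.Ico 1 (N+1), (rep j).length ≤ x) :
    ∑ m ∈ Finset.Icc 1 N, ((Finset.range (rep m).length).filter
        (fun k => k + r ≤ (rep m).length ∧
          ∀ i : Fin r, (rep m).getD (k + (i:ℕ)) 0 = w i.rev)).card
    ≤ ((Finset.Icc 1 x).filter (fun n => ∀ i : Fin r, z (n + (i:ℕ)) = w i)).card := by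
  set O : ℕ → ℕ := fun n => ∑ j ∈ Finset.Ico 1 n, (rep j).length with hO
  have hOmono : Monotone O := fun m n h =>
    Finset.sum_le_sum_of_subset (Finset.Ico_subset_Ico le_rfl h)
  have hOsucc : ∀ m, 1 ≤ m → O (m+1) = O m + (rep m).length := by
    intro m hm
    simpa using Finset.sum_Ico_succ_top hm (fun j => (rep j).length)
  set K : ℕ → Finset ℕ := fun m => (Finset.range (rep m).length).filter
        (fun k => k + r ≤ (rep m).length ∧
          ∀ i : Fin r, (rep m).getD (k + (i:ℕ)) 0 = w i.rev) with hK
  set t : ℕ → Finset ℕ := fun m => (K m).image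
        (fun k => O m + ((rep m).length + 1 - r - k)) with ht
  have hcard : ∀ m, (t m).card = (K m).card := by
    intro m
    apply Finset.card_image_of_injOn
    intro k1 h1 k2 h2 he
    simp only [hK, Finset.mem_coe, Finset.mem_filter, Finset.mem_range] at h1 h2
    have e1 : k1 + r ≤ (rep m).length := h1.2.1
    have e2 : k2 + r ≤ (rep m).length := h2.2.1
    have he' : O m + ((rep m).length + 1 - r - k1) = O m + ((rep m).length + 1 - r - k2) := he
    omega
  have htmem : ∀ m, 1 ≤ m → ∀ n ∈ t m, O m < n ∧ n + r ≤ O (m+1) + 1 ∧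
      ∀ i : Fin r, z (n + (i:ℕ)) = w i := by
    intro m hm n hn
    simp only [ht, Finset.mem_image] at hn
    obtain ⟨k, hk, rfl⟩ := hn
    simp only [hK, Finset.mem_filter, Finset.mem_range] at hk
    obtain ⟨hklt, hkr, hkpat⟩ := hk
    refine ⟨by omega, by rw [hOsucc m hm]; omega, ?_⟩
    intro i
    have hi : (i:ℕ) < r := i.isLt
    set L := (rep m).length
    set k' := L + 1 - r - k + (i:ℕ) with hk'
    have h1 : 1 ≤ k' := by omega
    have h2 : k' ≤ L := by omega
    have heq : O m + (L + 1 - r - k) + (i:ℕ) = k' + O m := by omega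
    rw [heq, hz m (by omega) k' h1 h2]
    have hrev : L - k' = k + ((i.rev : Fin r) : ℕ) := by
      have : ((i.rev : Fin r) : ℕ) = r - ((i:ℕ) + 1) := Fin.val_rev i
      omega
    rw [hrev, hkpat i.rev, Fin.rev_rev]
  calc ∑ m ∈ Finset.Icc 1 N, (K m).card
      = ∑ m ∈ Finset.Icc 1 N, (t m).card := by
        exact Finset.sum_congr rfl fun m _ => (hcard m).symm
    _ = ((Finset.Icc 1 N).biUnion t).card := by
        refine (Finset.card_biUnion ?_).symm
        intro m hm m' hm' hne
        simp only [Finset.mem_coe, Finset.mem_Icc] at hm hm'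
        rw [Function.onFun, Finset.disjoint_left]
        intro n hn hn'
        have h1 := htmem m hm.1 n hn
        have h2 := htmem m' hm'.1 n hn'
        rcases Nat.lt_or_ge m m' with h | h
        · have : O (m+1) ≤ O m' := hOmono h
          omega
        · have hlt : m' < m := by omega
          have : O (m'+1) ≤ O m := hOmono hlt
          omega
    _ ≤ ((Finset.Icc 1 x).filter (fun n => ∀ i : Fin r, z (n + (i:ℕ)) = w i)).card := by
        apply Finset.card_le_card
        intro n hn
        simp only [Finset.mem_biUnion] at hn
        obtain ⟨m, hm, hn⟩ := hn
        simp only [Finset.mem_Icc] at hm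
        have h := htmem m hm.1 n hn
        simp only [Finset.mem_filter, Finset.mem_Icc]
        have hle : O (m+1) ≤ O (N+1) := hOmono (by omega)
        have hx' : O (N+1) ≤ x := hx
        exact ⟨⟨by omega, by omega⟩, h.2.2⟩



private lemma CRB_comb_up (r : ℕ) (hr : 1 ≤ r) (w : Fin r → ℕ)
    (rep : ℕ → List ℕ) (z : ℕ → ℕ)
    (hz : ∀ n : ℕ, 0 < n → ∀ k : ℕ, 1 ≤ k → k ≤ (rep n).length →
      z (k + ∑ j ∈ Finset.Ico 1 n, (rep j).length) = (rep n).getD ((rep n).length - k) 0)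
    (N x : ℕ) (hx : x < ∑ j ∈ Finset.Ico 1 (N+2), (rep j).length) :
    ((Finset.Icc 1 x).filter (fun n => ∀ i : Fin r, z (n + (i:ℕ)) = w i)).card
    ≤ (∑ m ∈ Finset.Icc 1 (N+1), ((Finset.range (rep m).length).filter
        (fun k => k + r ≤ (rep m).length ∧
          ∀ i : Fin r, (rep m).getD (k + (i:ℕ)) 0 = w i.rev)).card) + r * (N+1) := by
  set O : ℕ → ℕ := fun n => ∑ j ∈ Finset.Ico 1 n, (rep j).length with hO
  have hOmono : Monotone O := fun m n h =>
    Finset.sum_le_sum_of_subset (Finset.Ico_subset_Ico le_rfl h)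
  have hOsucc : ∀ m, 1 ≤ m → O (m+1) = O m + (rep m).length := by
    intro m hm
    simpa using Finset.sum_Ico_succ_top hm (fun j => (rep j).length)
  have hO1 : O 1 = 0 := by simp [hO]
  set K : ℕ → Finset ℕ := fun m => (Finset.range (rep m).length).filter
        (fun k => k + r ≤ (rep m).length ∧
          ∀ i : Fin r, (rep m).getD (k + (i:ℕ)) 0 = w i.rev) with hK
  set Mset : Finset ℕ := (Finset.Icc 1 x).filter
        (fun n => ∀ i : Fin r, z (n + (i:ℕ)) = w i) with hM
  have hx' : x < O (N+2) := hx
  -- cover Mset by blocks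
  have hcover : Mset ⊆ (Finset.Icc 1 (N+1)).biUnion
      (fun m => (Finset.Ioc (O m) (O (m+1))).filter (fun n => ∀ i : Fin r, z (n + (i:ℕ)) = w i)) := by
    intro n hn
    simp only [hM, Finset.mem_filter, Finset.mem_Icc] at hn
    obtain ⟨⟨hn1, hn2⟩, hmatch⟩ := hn
    set m := Nat.findGreatest (fun m => O m < n) (N+1) with hm
    have hm1 : 1 ≤ m := Nat.le_findGreatest (by omega) (by omega)
    have hmN1 : m ≤ N+1 := Nat.findGreatest_le _
    have hmlt : O m < n := Nat.findGreatest_spec (P := fun m => O m < n) (by omega : 1 ≤ N+1) (by omega)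
    have hmle : n ≤ O (m+1) := by
      rcases Nat.lt_or_ge m (N+1) with h | h
      · by_contra hc
        exact (Nat.findGreatest_is_greatest (by omega : m < m+1) (by omega)) (by omega)
      · have hmN : m = N+1 := le_antisymm hmN1 h
        rw [hmN]
        show n ≤ O (N+2)
        omega
    simp only [Finset.mem_biUnion]
    exact ⟨m, Finset.mem_Icc.mpr ⟨hm1, hmN1⟩, by
      simp only [Finset.mem_filter, Finset.mem_Ioc]; exact ⟨⟨hmlt, hmle⟩, hmatch⟩⟩
  calc Mset.card ≤ ∑ m ∈ Finset.Icc 1 (N+1),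
      ((Finset.Ioc (O m) (O (m+1))).filter (fun n => ∀ i : Fin r, z (n + (i:ℕ)) = w i)).card :=
        le_trans (Finset.card_le_card hcover) (Finset.card_biUnion_le)
    _ ≤ ∑ m ∈ Finset.Icc 1 (N+1), ((K m).card + r) := by
        apply Finset.sum_le_sum
        intro m hm
        simp only [Finset.mem_Icc] at hm
        set B : Finset ℕ := (Finset.Ioc (O m) (O (m+1))).filter
          (fun n => ∀ i : Fin r, z (n + (i:ℕ)) = w i) with hB
        have hsplit : (B.filter (fun n => n + r ≤ O (m+1) + 1)).card +
            (B.filter (fun n => ¬ (n + r ≤ O (m+1) + 1))).card = B.card :=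
          Finset.card_filter_add_card_filter_not _
        have h2 : (B.filter (fun n => ¬ (n + r ≤ O (m+1) + 1))).card ≤ r := by
          have hsub : (B.filter (fun n => ¬ (n + r ≤ O (m+1) + 1))) ⊆
              Finset.Ioc (O (m+1) + 1 - r) (O (m+1)) := by
            intro n hn
            simp only [hB, Finset.mem_filter, Finset.mem_Ioc] at hn ⊢
            omega
          calc _ ≤ (Finset.Ioc (O (m+1) + 1 - r) (O (m+1))).card := Finset.card_le_card hsub
            _ = O (m+1) - (O (m+1) + 1 - r) := Nat.card_Ioc _ _
            _ ≤ r := by omega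
        have h1 : (B.filter (fun n => n + r ≤ O (m+1) + 1)).card ≤ (K m).card := by
          apply Finset.card_le_card_of_injOn (fun n => O (m+1) + 1 - r - n)
          · intro n hn
            simp only [hB, Finset.mem_coe, Finset.mem_filter, Finset.mem_Ioc] at hn
            obtain ⟨⟨⟨hn1, hn2⟩, hmatch⟩, hnr⟩ := hn
            have hLm : O (m+1) = O m + (rep m).length := hOsucc m hm.1
            set L := (rep m).length
            simp only [hK, Finset.mem_coe, Finset.mem_filter, Finset.mem_range]
            refine ⟨by omega, by omega, ?_⟩
            intro j
            have hj : (j:ℕ) < r := j.isLt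
            have hjrev : ((j.rev : Fin r) : ℕ) = r - ((j:ℕ) + 1) := Fin.val_rev j
            set k'' := n - O m + ((j.rev : Fin r) : ℕ) with hk''
            have hz' := hz m (by omega) k'' (by omega) (by omega)
            have heq : n + ((j.rev : Fin r) : ℕ) = k'' + O m := by omega
            have := hmatch j.rev
            rw [heq, hz'] at this
            have hidx : L - k'' = O (m+1) + 1 - r - n + (j:ℕ) := by omega
            rw [hidx] at this
            exact this
          · intro n1 h1' n2 h2' he
            simp only [hB, Finset.mem_coe, Finset.mem_filter, Finset.mem_Ioc] at h1' h2'
            have he' : O (m+1) + 1 - r - n1 = O (m+1) + 1 - r - n2 := he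
            omega
        omega
    _ = (∑ m ∈ Finset.Icc 1 (N+1), (K m).card) + r * (N+1) := by
        rw [Finset.sum_add_distrib]
        congr 1
        simp [Nat.card_Icc, mul_comm]

private lemma CRB_main (q c C₁ C₀ : ℝ) (hq : 1 < q) (r : ℕ) (S T F : ℕ → ℕ)
    (hSb : ∀ N : ℕ, 3 ≤ N → |((S N : ℕ):ℝ) - c * ((N:ℝ) * Real.logb q N)| ≤ C₁ * N * Real.log (Real.log N))
    (hTb : ∀ N : ℕ, 3 ≤ N → |((T N : ℕ):ℝ) - 1 * ((N:ℝ) * Real.logb q N)| ≤ C₀ * N * Real.log (Real.log N))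
    (hTge : ∀ N : ℕ, N ≤ T N) (hT0 : T 0 = 0)
    (hlow : ∀ N x : ℕ, T N ≤ x → S N ≤ F x)
    (hup : ∀ N x : ℕ, x < T (N+1) → F x ≤ S (N+1) + r * (N+1)) :
    Tendsto (fun x : ℕ => ((F x : ℕ):ℝ)/x) atTop (nhds c) := by
  have hNφ_ne : ∀ N : ℕ, 2 ≤ N → ((N:ℝ) * Real.logb q N) ≠ 0 := by
    intro N hN
    have h1 : (1:ℝ) < N := by exact_mod_cast (by omega : 1 < N)
    have h2 : 0 < Real.logb q N := Real.logb_pos hq h1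
    have h3 : (0:ℝ) < N := by linarith
    positivity
  have hA : Tendsto (fun N : ℕ => ((S N:ℕ):ℝ) / ((N:ℝ) * Real.logb q N)) atTop (nhds c) :=
    CRB_ratio q c C₁ hq _ hSb
  have hB : Tendsto (fun N : ℕ => ((T N:ℕ):ℝ) / ((N:ℝ) * Real.logb q N)) atTop (nhds 1) :=
    CRB_ratio q 1 C₀ hq _ hTb
  have hB1 : Tendsto (fun N : ℕ => ((T (N+1):ℕ):ℝ) / ((N:ℝ) * Real.logb q N)) atTop (nhds 1) := by
    have h := (hB.comp (tendsto_add_atTop_nat 1)).mul (CRB_rho q hq)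
    rw [one_mul] at h
    refine h.congr' ?_
    filter_upwards [eventually_ge_atTop 2] with N hN
    have h1 := hNφ_ne N hN
    have h2 : (((N:ℝ)+1) * Real.logb q ((N:ℝ)+1)) ≠ 0 := by
      have := hNφ_ne (N+1) (by omega)
      push_cast at this
      exact this
    have h3 : Real.logb q ((N:ℝ)+1) ≠ 0 := right_ne_zero_of_mul h2
    simp only [Function.comp]
    push_cast
    field_simp
  have hg : Tendsto (fun N : ℕ => ((S N:ℕ):ℝ) / ((T (N+1):ℕ):ℝ)) atTop (nhds c) := by
    have h := hA.div hB1 one_ne_zero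
    rw [div_one] at h
    refine h.congr' ?_
    filter_upwards [eventually_ge_atTop 2] with N hN
    have h1 := hNφ_ne N hN
    have h2 : ((T (N+1):ℕ):ℝ) ≠ 0 := by
      have := hTge (N+1)
      exact Nat.cast_ne_zero.mpr (by omega)
    have h3 : Real.logb q (N:ℝ) ≠ 0 := right_ne_zero_of_mul h1
    simp only [Pi.div_apply]
    field_simp
  have hnum : Tendsto (fun N : ℕ => (((S (N+1):ℕ):ℝ) + (r:ℝ)*((N:ℝ)+1)) / ((N:ℝ) * Real.logb q N))
      atTop (nhds c) := by
    have hterm2 : Tendsto (fun N : ℕ => (r:ℝ) * (((N:ℝ)+1)/N) * (Real.logb q N)⁻¹) atTop (nhds 0) := by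
      have := (CRB_nat_succ_div.const_mul (r:ℝ)).mul (CRB_inv_logb q hq)
      simpa using this
    have h := ((hA.comp (tendsto_add_atTop_nat 1)).mul (CRB_rho q hq)).add hterm2
    rw [mul_one, add_zero] at h
    refine h.congr' ?_
    filter_upwards [eventually_ge_atTop 2] with N hN
    have h1 := hNφ_ne N hN
    have h2 : (((N:ℝ)+1) * Real.logb q ((N:ℝ)+1)) ≠ 0 := by
      have := hNφ_ne (N+1) (by omega)
      push_cast at this
      exact this
    have hN0 : (N:ℝ) ≠ 0 := Nat.cast_ne_zero.mpr (by omega)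
    have h3 : Real.logb q ((N:ℝ)+1) ≠ 0 := right_ne_zero_of_mul h2
    simp only [Function.comp]
    push_cast
    field_simp
  have hh : Tendsto (fun N : ℕ => (((S (N+1):ℕ):ℝ) + (r:ℝ)*((N:ℝ)+1)) / ((T N:ℕ):ℝ)) atTop (nhds c) := by
    have h := hnum.div hB one_ne_zero
    rw [div_one] at h
    refine h.congr' ?_
    filter_upwards [eventually_ge_atTop 2] with N hN
    have h1 := hNφ_ne N hN
    have h2 : ((T N:ℕ):ℝ) ≠ 0 := Nat.cast_ne_zero.mpr (by have := hTge N; omega)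
    have h3 : Real.logb q (N:ℝ) ≠ 0 := right_ne_zero_of_mul h1
    simp only [Pi.div_apply]
    field_simp
  classical
  set Nx : ℕ → ℕ := fun x => Nat.findGreatest (fun N => T N ≤ x) x with hNxdef
  have hNx1 : ∀ x, T (Nx x) ≤ x := fun x =>
    Nat.findGreatest_spec (P := fun N => T N ≤ x) (Nat.zero_le x) (by show T 0 ≤ x; rw [hT0]; exact Nat.zero_le x)
  have hNx2 : ∀ x, x < T (Nx x + 1) := by
    intro x
    by_contra hcon
    push_neg at hcon
    have hle : Nx x + 1 ≤ x := le_trans (hTge _) hcon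
    exact Nat.findGreatest_is_greatest (Nat.lt_succ_self _) hle hcon
  have hNxtop : Tendsto Nx atTop atTop := by
    rw [tendsto_atTop_atTop]
    intro M
    refine ⟨M + T M, fun x hx => ?_⟩
    exact Nat.le_findGreatest (by omega) (by omega)
  apply tendsto_of_tendsto_of_tendsto_of_le_of_le' (hg.comp hNxtop) (hh.comp hNxtop)
  · filter_upwards [eventually_ge_atTop 1] with x hx2
    have hlow' := hlow (Nx x) x (hNx1 x)
    have hx_le : x ≤ T (Nx x + 1) := le_of_lt (hNx2 x)
    have hxpos : (0:ℝ) < x := by exact_mod_cast hx2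
    simp only [Function.comp]
    have hc1 : (x:ℝ) ≤ ((T (Nx x + 1):ℕ):ℝ) := by exact_mod_cast hx_le
    have hc2 : ((S (Nx x):ℕ):ℝ) ≤ ((F x:ℕ):ℝ) := by exact_mod_cast hlow'
    calc ((S (Nx x):ℕ):ℝ)/((T (Nx x + 1):ℕ):ℝ) ≤ ((S (Nx x):ℕ):ℝ)/x := by gcongr
      _ ≤ ((F x:ℕ):ℝ)/x := by gcongr
  · filter_upwards [hNxtop.eventually_ge_atTop 1, eventually_ge_atTop 1] with x hx1 hx2
    have hup' := hup (Nx x) x (hNx2 x)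
    have hTx : T (Nx x) ≤ x := hNx1 x
    have hxpos : (0:ℝ) < x := by exact_mod_cast hx2
    have hTpos : (0:ℝ) < ((T (Nx x):ℕ):ℝ) := by
      have := hTge (Nx x)
      exact_mod_cast (by omega : 0 < T (Nx x))
    have hc1 : ((T (Nx x):ℕ):ℝ) ≤ (x:ℝ) := by exact_mod_cast hTx
    have hc2 : ((F x:ℕ):ℝ) ≤ ((S (Nx x + 1):ℕ):ℝ) + (r:ℝ)*((Nx x:ℝ)+1) := by
      have : ((F x:ℕ):ℝ) ≤ ((S (Nx x + 1) + r * (Nx x + 1) : ℕ):ℝ) := by exact_mod_cast hup'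
      push_cast at this
      linarith
    simp only [Function.comp]
    calc ((F x:ℕ):ℝ)/x ≤ (((S (Nx x + 1):ℕ):ℝ) + (r:ℝ)*((Nx x:ℝ)+1))/x := by gcongr
      _ ≤ (((S (Nx x + 1):ℕ):ℝ) + (r:ℝ)*((Nx x:ℝ)+1))/((T (Nx x):ℕ):ℝ) := by
          have hnn : (0:ℝ) ≤ ((S (Nx x + 1):ℕ):ℝ) + (r:ℝ)*((Nx x:ℝ)+1) := by positivity
          gcongr




def IsRep (a b n : ℕ) (L : List ℕ) : Prop :=
  (∀ d ∈ L, d < a) ∧ L ≠ [] ∧ L.getLast? ≠ some 0 ∧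
    (∑ k ∈ Finset.range L.length, (L.getD k 0 : ℚ) * ((a : ℚ) / b) ^ k) / b = n

/-- The generalized Champernowne number `𝔷_{a/b}`, whose base-`a` digit
sequence `z` is the concatenation of the base-`a/b` representations of
`1, 2, 3, …`, is normal in base `a`: every digit string `w` of length `r`
over `{0,…,a-1}` occurs in `z` with asymptotic frequency `a^{-r}`. This is
deduced from the pattern-counting theorem
`S_w(N) = N a^{-|w|} log_{a/b} N + O(N log log N)`. -/
theorem champernowne_rational_base_normal
    (a b : ℕ) (hb : 1 ≤ b) (hab : b < a) (hcop : Nat.Coprime a b)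
    (rep : ℕ → List ℕ) (hrep : ∀ n : ℕ, 0 < n → IsRep a b n (rep n))
    (z : ℕ → ℕ)
    (hz : ∀ n : ℕ, 0 < n → ∀ k : ℕ, 1 ≤ k → k ≤ (rep n).length →
      z (k + ∑ j ∈ Finset.Ico 1 n, (rep j).length) = (rep n).getD ((rep n).length - k) 0)
    (hS : ∀ r : ℕ, 1 ≤ r → ∀ w : Fin r → ℕ, (∀ i, w i < a) →
      ∃ C : ℝ, ∀ N : ℕ, 3 ≤ N →
        |((∑ n ∈ Finset.Icc 1 N, ((Finset.range (rep n).length).filter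
              (fun k => k + r ≤ (rep n).length ∧
                ∀ i : Fin r, (rep n).getD (k + (i : ℕ)) 0 = w i)).card : ℕ) : ℝ) -
            (N : ℝ) / (a : ℝ) ^ r * Real.logb ((a : ℝ) / b) N| ≤
          C * N * Real.log (Real.log N)) :
    ∀ r : ℕ, 1 ≤ r → ∀ w : Fin r → ℕ, (∀ i, w i < a) →
      Filter.Tendsto (fun x : ℕ =>
          (((Finset.Icc 1 x).filter
              (fun n => ∀ i : Fin r, z (n + (i : ℕ)) = w i)).card : ℝ) / x)
        Filter.atTop (nhds (1 / (a : ℝ) ^ r)) := by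
  intro r hr w hw
  classical
  have hbpos : (0:ℝ) < b := by exact_mod_cast hb
  have hq : 1 < (a:ℝ)/b := by
    rw [lt_div_iff₀ hbpos, one_mul]
    exact_mod_cast hab
  -- the block-counting hypothesis for the reversed word
  obtain ⟨C₁, hC₁⟩ := hS r hr (fun i => w i.rev) (fun i => hw _)
  have hSb : ∀ N : ℕ, 3 ≤ N →
      |((∑ m ∈ Finset.Icc 1 N, ((Finset.range (rep m).length).filter
            (fun k => k + r ≤ (rep m).length ∧
              ∀ i : Fin r, (rep m).getD (k + (i:ℕ)) 0 = w i.rev)).card : ℕ):ℝ)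
        - (1/(a:ℝ)^r) * ((N:ℝ) * Real.logb ((a:ℝ)/b) N)|
      ≤ C₁ * N * Real.log (Real.log N) := by
    intro N hN
    have he : (1/(a:ℝ)^r) * ((N:ℝ) * Real.logb ((a:ℝ)/b) N)
        = (N:ℝ)/(a:ℝ)^r * Real.logb ((a:ℝ)/b) N := by ring
    rw [he]
    exact hC₁ N hN
  -- single-digit counting constants, controlling the total length
  have hexC : ∀ d : ℕ, d < a → ∃ Cd : ℝ, ∀ N : ℕ, 3 ≤ N →
      |((∑ n ∈ Finset.Icc 1 N, ((Finset.range (rep n).length).filter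
            (fun k => k + 1 ≤ (rep n).length ∧
              ∀ i : Fin 1, (rep n).getD (k + (i:ℕ)) 0 = d)).card : ℕ):ℝ)
        - (N:ℝ)/(a:ℝ)^1 * Real.logb ((a:ℝ)/b) N|
      ≤ Cd * N * Real.log (Real.log N) := fun d hd => hS 1 le_rfl (fun _ => d) (fun _ => hd)
  choose! Cd hCd using hexC
  have hTb : ∀ N : ℕ, 3 ≤ N →
      |((∑ j ∈ Finset.Icc 1 N, (rep j).length : ℕ):ℝ)
        - 1 * ((N:ℝ) * Real.logb ((a:ℝ)/b) N)|
      ≤ (∑ d ∈ Finset.range a, Cd d) * N * Real.log (Real.log N) := by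
    intro N hN
    have hsum : ((∑ j ∈ Finset.Icc 1 N, (rep j).length : ℕ):ℝ) =
        ∑ d ∈ Finset.range a, ((∑ n ∈ Finset.Icc 1 N, ((Finset.range (rep n).length).filter
          (fun k => k + 1 ≤ (rep n).length ∧
            ∀ i : Fin 1, (rep n).getD (k + (i:ℕ)) 0 = d)).card : ℕ):ℝ) := by
      norm_cast
      calc ∑ j ∈ Finset.Icc 1 N, (rep j).length
          = ∑ j ∈ Finset.Icc 1 N, ∑ d ∈ Finset.range a, ((Finset.range (rep j).length).filter
              (fun k => k + 1 ≤ (rep j).length ∧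
                ∀ i : Fin 1, (rep j).getD (k + (i:ℕ)) 0 = d)).card :=
            Finset.sum_congr rfl fun n hn =>
              CRB_len_eq a (rep n) (hrep n (Finset.mem_Icc.mp hn).1).1
        _ = _ := Finset.sum_comm
    have haR : (0:ℝ) < a := by exact_mod_cast (by omega : 0 < a)
    have hone : (1:ℝ) * ((N:ℝ) * Real.logb ((a:ℝ)/b) N) =
        ∑ _d ∈ Finset.range a, (N:ℝ)/(a:ℝ)^1 * Real.logb ((a:ℝ)/b) N := by
      rw [Finset.sum_const, Finset.card_range, nsmul_eq_mul, pow_one]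
      field_simp
    rw [hsum, hone, ← Finset.sum_sub_distrib]
    refine (Finset.abs_sum_le_sum_abs _ _).trans ?_
    rw [Finset.sum_mul, Finset.sum_mul]
    exact Finset.sum_le_sum fun d hd => hCd d (Finset.mem_range.mp hd) N hN
  -- basic facts about the running total of lengths
  have hlen1 : ∀ j : ℕ, 1 ≤ j → 1 ≤ (rep j).length := by
    intro j hj
    have hnil := (hrep j hj).2.1
    exact List.length_pos_iff.mpr hnil
  have hTge : ∀ N : ℕ, N ≤ ∑ j ∈ Finset.Icc 1 N, (rep j).length := by
    intro N
    calc N = ∑ _j ∈ Finset.Icc 1 N, 1 := by simp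
      _ ≤ _ := Finset.sum_le_sum fun j hj => hlen1 j (Finset.mem_Icc.mp hj).1
  have hT0 : (∑ j ∈ Finset.Icc 1 0, (rep j).length) = 0 := by simp
  -- combinatorial sandwich
  have hlow : ∀ N x : ℕ, (∑ j ∈ Finset.Icc 1 N, (rep j).length) ≤ x →
      (∑ m ∈ Finset.Icc 1 N, ((Finset.range (rep m).length).filter
        (fun k => k + r ≤ (rep m).length ∧
          ∀ i : Fin r, (rep m).getD (k + (i:ℕ)) 0 = w i.rev)).card)
      ≤ ((Finset.Icc 1 x).filter (fun n => ∀ i : Fin r, z (n + (i:ℕ)) = w i)).card := by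
    intro N x hx
    refine CRB_comb_low r hr w rep z hz N x ?_
    rw [Finset.Ico_add_one_right_eq_Icc]
    exact hx
  have hup : ∀ N x : ℕ, x < (∑ j ∈ Finset.Icc 1 (N+1), (rep j).length) →
      ((Finset.Icc 1 x).filter (fun n => ∀ i : Fin r, z (n + (i:ℕ)) = w i)).card
      ≤ (∑ m ∈ Finset.Icc 1 (N+1), ((Finset.range (rep m).length).filter
        (fun k => k + r ≤ (rep m).length ∧
          ∀ i : Fin r, (rep m).getD (k + (i:ℕ)) 0 = w i.rev)).card) + r * (N+1) := by
    intro N x hx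
    refine CRB_comb_up r hr w rep z hz N x ?_
    show x < ∑ j ∈ Finset.Ico 1 (N+1+1), (rep j).length
    rw [Finset.Ico_add_one_right_eq_Icc]
    exact hx
  exact CRB_main ((a:ℝ)/b) (1/(a:ℝ)^r) C₁ (∑ d ∈ Finset.range a, Cd d) hq r
    (fun N => ∑ m ∈ Finset.Icc 1 N, ((Finset.range (rep m).length).filter
      (fun k => k + r ≤ (rep m).length ∧
        ∀ i : Fin r, (rep m).getD (k + (i:ℕ)) 0 = w i.rev)).card)
    (fun N => ∑ j ∈ Finset.Icc 1 N, (rep j).length)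
    (fun x => ((Finset.Icc 1 x).filter (fun n => ∀ i : Fin r, z (n + (i:ℕ)) = w i)).card)
    hSb hTb hTge hT0 hlow hup
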